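/- If n is a positive integer with n < 2^ν, then B(n·(2^ν - 1)) = ν, where B denotes the binary digit sum. -/

import Mathlib

def B (n : ℕ) : ℕ := (Nat.digits 2 n).sum

lemma B_step (q r : ℕ) (hr : r < 2) : B (2 * q + r) = r + B q := by
  rcases Nat.eq_zero_or_pos q with hq | hq
  · subst hq
    interval_cases r <;> simp [B]
  · unfold B
    rw [Nat.digits_def' (by norm_num : 1 < 2) (by omega)]
    have h1 : (2 * q + r) % 2 = r := by omega
    have h2 : (2 * q + r) / 2 = q := by omega
    rw [h1, h2]
    simp

lemma B_compl (ν : ℕ) : ∀ m < 2 ^ ν, B m + B (2 ^ ν - 1 - m) = ν := by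
  induction ν with
  | zero => intro m hm; interval_cases m; simp [B]
  | succ ν ih =>
    intro m hm
    have hq : m / 2 < 2 ^ ν := by rw [pow_succ] at hm; omega
    have e1 : m = 2 * (m / 2) + m % 2 := by omega
    have e2 : 2 ^ (ν + 1) - 1 - m = 2 * (2 ^ ν - 1 - m / 2) + (1 - m % 2) := by
      have : 0 < 2 ^ ν := Nat.pow_pos (by norm_num)
      rw [pow_succ] at *; omega
    have key := ih (m / 2) hq
    calc B m + B (2 ^ (ν + 1) - 1 - m)
        = B (2 * (m / 2) + m % 2) + B (2 * (2 ^ ν - 1 - m / 2) + (1 - m % 2)) := by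
          rw [← e1, ← e2]
      _ = ν + 1 := by
          rw [B_step _ _ (by omega), B_step _ _ (by omega)]; omega

lemma B_split (ν : ℕ) : ∀ a, ∀ b < 2 ^ ν, B (a * 2 ^ ν + b) = B a + B b := by
  induction ν with
  | zero => intro a b hb; interval_cases b; simp [B]
  | succ ν ih =>
    intro a b hb
    have hq : b / 2 < 2 ^ ν := by rw [pow_succ] at hb; omega
    have e1 : a * 2 ^ (ν + 1) + b = 2 * (a * 2 ^ ν + b / 2) + b % 2 := by
      rw [pow_succ]; ring_nf; omega
    have e2 : b = 2 * (b / 2) + b % 2 := by omega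
    have key := ih a (b / 2) hq
    rw [e1, B_step _ _ (by omega), key]
    conv_rhs => rw [e2, B_step _ _ (by omega)]
    omega

theorem stmt_6 (n ν : ℕ) (hn : 0 < n) (h : n < 2 ^ ν) : B (n * (2 ^ ν - 1)) = ν := by
  have hp : 0 < 2 ^ ν := Nat.pow_pos (by norm_num)
  have key : n * (2 ^ ν - 1) = (n - 1) * 2 ^ ν + (2 ^ ν - 1 - (n - 1)) := by
    have h1 : n * (2 ^ ν - 1) = n * 2 ^ ν - n := by
      rw [Nat.mul_sub]; ring_nf
    have h2 : n * 2 ^ ν = (n - 1) * 2 ^ ν + 2 ^ ν := by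
      cases n with
      | zero => omega
      | succ k => simp [add_mul]
    omega
  rw [key, B_split ν (n - 1) _ (by omega), B_compl ν (n - 1) (by omega)]
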